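/- Let $t \ge 2$ and let $G$ be a simple graph on $n$ vertices. If $x \in \Delta^{n-1}$ is a minimizer of $\Phi(G,\cdot)$ over $\Delta^{n-1}$ whose support induces a clique of size $k$ in $G$, then $\Phi(G,x) \ge \frac{1}{k^t}\binom{k}{t} - \sum_{K_t \subseteq \operatorname{Supp}(x)} \prod_{v \in V(K_t)} x_v \ge 0$; in particular, by Maclaurin's inequality, $\sum_{K_t \subseteq \operatorname{Supp}(x)} \prod_{v \in V(K_t)} x_v \le \frac{1}{k^t}\binom{k}{t}$. -/

import Mathlib

open Finset
open scoped Classical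

/-- The order of the largest clique of `G` containing the vertex `v`. -/
noncomputable def cliqueAt {n : ℕ} (G : SimpleGraph (Fin n)) (v : Fin n) : ℕ :=
  ((univ : Finset (Finset (Fin n))).filter
    (fun s : Finset (Fin n) => G.IsClique (s : Set (Fin n)) ∧ v ∈ s)).sup Finset.card

/-- The set of copies of `K_t` in `G`, as `t`-element vertex sets inducing cliques. -/
noncomputable def ktCliques {n : ℕ} (G : SimpleGraph (Fin n)) (t : ℕ) :
    Finset (Finset (Fin n)) :=
  (univ : Finset (Finset (Fin n))).filter
    (fun s : Finset (Fin n) => s.card = t ∧ G.IsClique (s : Set (Fin n)))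

/-- `N(G, K_t)`, the number of copies of `K_t` in `G`. -/
noncomputable def numKt {n : ℕ} (G : SimpleGraph (Fin n)) (t : ℕ) : ℕ :=
  (ktCliques G t).card

/-- The standard simplex `Δ^{n-1}`. -/
def simplex (n : ℕ) : Set (Fin n → ℝ) :=
  {x | (∀ i, 0 ≤ x i) ∧ ∑ i, x i = 1}

/-- `Φ(G, x) = A(G,x) - B(G,x)`. -/
noncomputable def PhiFn {n : ℕ} (G : SimpleGraph (Fin n)) (t : ℕ) (x : Fin n → ℝ) : ℝ :=
  (∑ v, x v * ((cliqueAt G v).choose t : ℝ) / (cliqueAt G v : ℝ) ^ t)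
    - ∑ s ∈ ktCliques G t, ∏ v ∈ s, x v

/-- The support of `x`, as a finset. -/
noncomputable def suppF {n : ℕ} (x : Fin n → ℝ) : Finset (Fin n) :=
  (univ : Finset (Fin n)).filter (fun v => 0 < x v)

/-- `x` is a minimizer of `Φ(G, ·)` over the simplex. -/
def IsMinimizer {n : ℕ} (G : SimpleGraph (Fin n)) (t : ℕ) (x : Fin n → ℝ) : Prop :=
  x ∈ simplex n ∧ ∀ y ∈ simplex n, PhiFn G t x ≤ PhiFn G t y

/-- `δ_{ij}(x)`. -/
noncomputable def deltaFn {n : ℕ} (G : SimpleGraph (Fin n)) (t : ℕ) (x : Fin n → ℝ)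
    (i j : Fin n) : ℝ :=
  (((cliqueAt G i).choose t : ℝ) / (cliqueAt G i : ℝ) ^ t
      - ((cliqueAt G j).choose t : ℝ) / (cliqueAt G j : ℝ) ^ t)
    - ((∑ s ∈ (ktCliques G (t - 1)).filter (fun s => ∀ v ∈ s, G.Adj i v), ∏ v ∈ s, x v)
      - (∑ s ∈ (ktCliques G (t - 1)).filter (fun s => ∀ v ∈ s, G.Adj j v), ∏ v ∈ s, x v))

/-- `G` is a regular complete multipartite graph: the vertices can be colored so that
adjacency is exactly "different colors" and all color classes have the same size. -/
def IsRegularCompleteMultipartite {n : ℕ} (G : SimpleGraph (Fin n)) : Prop :=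
  ∃ (r : ℕ) (f : Fin n → Fin r),
    (∀ u v, G.Adj u v ↔ f u ≠ f v) ∧
    (∀ a b : Fin r,
      ((univ : Finset (Fin n)).filter (fun v => f v = a)).card =
        ((univ : Finset (Fin n)).filter (fun v => f v = b)).card)


/-! ### Auxiliary machinery: Maclaurin's inequality via smoothing -/

noncomputable def eS19 {ι : Type*} (R : Finset ι) (m : ℕ) (w : ι → ℝ) : ℝ :=
  ∑ T ∈ R.powersetCard m, ∏ i ∈ T, w i

lemma eS19_nonneg {ι : Type*} (R : Finset ι) (m : ℕ) (w : ι → ℝ)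
    (h : ∀ i ∈ R, 0 ≤ w i) : 0 ≤ eS19 R m w := by
  apply Finset.sum_nonneg
  intro T hT
  exact Finset.prod_nonneg fun i hi => h i ((Finset.mem_powersetCard.mp hT).1 hi)

lemma eS19_congr {ι : Type*} {R : Finset ι} {m : ℕ} {w w' : ι → ℝ}
    (h : ∀ i ∈ R, w i = w' i) : eS19 R m w = eS19 R m w' := by
  apply Finset.sum_congr rfl
  intro T hT
  exact Finset.prod_congr rfl fun i hi => h i ((Finset.mem_powersetCard.mp hT).1 hi)

lemma eS19_insert {ι : Type*} [DecidableEq ι] {R : Finset ι} {i : ι} (hi : i ∉ R)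
    (m : ℕ) (w : ι → ℝ) :
    eS19 (insert i R) (m + 1) w = eS19 R (m + 1) w + w i * eS19 R m w := by
  unfold eS19
  rw [Finset.powersetCard_succ_insert hi, Finset.sum_union, Finset.sum_image, Finset.mul_sum]
  · congr 1
    apply Finset.sum_congr rfl
    intro T hT
    rw [Finset.prod_insert]
    intro hiT
    exact hi ((Finset.mem_powersetCard.mp hT).1 hiT)
  · intro T hT T' hT' hins
    have hiT : i ∉ T := fun hh => hi ((Finset.mem_powersetCard.mp hT).1 hh)
    have hiT' : i ∉ T' := fun hh => hi ((Finset.mem_powersetCard.mp hT').1 hh)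
    rw [← Finset.erase_insert hiT, ← Finset.erase_insert hiT', hins]
  · rw [Finset.disjoint_left]
    intro T hT hT2
    obtain ⟨U, hU, rfl⟩ := Finset.mem_image.mp hT2
    have : i ∈ insert i U := Finset.mem_insert_self _ _
    exact hi ((Finset.mem_powersetCard.mp hT).1 this)

lemma maclaurin19 {ι : Type*} [Fintype ι] [DecidableEq ι] (t : ℕ) (ht : 2 ≤ t)
    (w : ι → ℝ) (h0 : ∀ i, 0 ≤ w i) (h1 : ∑ i, w i = 1) :
    eS19 (univ : Finset ι) t w ≤
      ((Fintype.card ι).choose t : ℝ) / (Fintype.card ι : ℝ) ^ t := by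
  obtain ⟨m, rfl⟩ : ∃ m, t = m + 2 := ⟨t - 2, by omega⟩
  have hne : Nonempty ι := by
    by_contra h
    rw [not_nonempty_iff] at h
    rw [Finset.univ_eq_empty, Finset.sum_empty] at h1
    norm_num at h1
  set k := Fintype.card ι with hkdef
  have hk : 0 < k := Fintype.card_pos
  have hkR : (0:ℝ) < (k:ℝ) := by exact_mod_cast hk
  have key : ∀ ε : ℝ, 0 < ε →
      eS19 (univ : Finset ι) (m + 2) w ≤ (k.choose (m+2) : ℝ) / (k:ℝ)^(m+2) + ε := by
    intro ε hε
    set g : (ι → ℝ) → ℝ := fun v => eS19 univ (m+2) v - ε * ∑ i, (v i)^2 with hgdef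
    have hgc : Continuous g := by
      apply Continuous.sub
      · exact continuous_finset_sum _ fun T _ =>
          continuous_finset_prod _ fun i _ => continuous_apply i
      · exact continuous_const.mul
          (continuous_finset_sum _ fun i _ => (continuous_apply i).pow 2)
    have hw : w ∈ stdSimplex ℝ ι := ⟨h0, h1⟩
    obtain ⟨z, hz, hzmax⟩ := (isCompact_stdSimplex ℝ ι).exists_isMaxOn ⟨w, hw⟩ hgc.continuousOn
    obtain ⟨hz0, hz1⟩ := hz
    -- z is constant
    have hconst : ∀ i j : ι, z i = z j := by
      by_contra hcc
      push_neg at hcc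
      obtain ⟨i, j, hij0⟩ := hcc
      have hij : i ≠ j := fun h => hij0 (by rw [h])
      set a := z i with ha
      set b := z j with hb
      set c := (a + b) / 2 with hc
      set z' := Function.update (Function.update z i c) j c with hz'def
      have hz'i : z' i = c := by
        rw [hz'def, Function.update_of_ne hij, Function.update_self]
      have hz'j : z' j = c := by rw [hz'def, Function.update_self]
      set R := (univ : Finset ι).erase i |>.erase j with hR
      have hjR : j ∉ R := by simp [hR]
      have hiR : i ∉ R := by simp [hR, hij]
      have hijR : i ∉ insert j R := by
        simp [hR, hij, Finset.mem_insert]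
      have huniv : insert i (insert j R) = (univ : Finset ι) := by
        rw [hR]
        rw [Finset.insert_erase (Finset.mem_erase.mpr ⟨hij.symm, Finset.mem_univ _⟩)]
        exact Finset.insert_erase (Finset.mem_univ _)
      have hz'R : ∀ l ∈ R, z' l = z l := by
        intro l hl
        have hli : l ≠ i := by rintro rfl; exact hiR hl
        have hlj : l ≠ j := by rintro rfl; exact hjR hl
        rw [hz'def, Function.update_of_ne hlj, Function.update_of_ne hli]
      have hsumdec : ∀ f : ι → ℝ, ∑ l, f l = f i + (f j + ∑ l ∈ R, f l) := by
        intro f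
        rw [← huniv, Finset.sum_insert hijR, Finset.sum_insert hjR]
      have hc0 : 0 ≤ c := by
        have := h0 i
        have hbz := hz0 j
        have haz := hz0 i
        rw [hc]; positivity
      have hz'mem : z' ∈ stdSimplex ℝ ι := by
        constructor
        · intro l
          by_cases hli : l = i
          · rw [hli, hz'i]; exact hc0
          · by_cases hlj : l = j
            · rw [hlj, hz'j]; exact hc0
            · rw [hz'def, Function.update_of_ne hlj, Function.update_of_ne hli]
              exact hz0 l
        · rw [hsumdec z', hz'i, hz'j, Finset.sum_congr rfl hz'R]
          rw [hsumdec z] at hz1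
          rw [← hz1, hc, ha, hb]; ring_nf
      have hEdec : ∀ v : ι → ℝ, eS19 univ (m+2) v =
          eS19 R (m+2) v + v j * eS19 R (m+1) v
            + v i * (eS19 R (m+1) v + v j * eS19 R m v) := by
        intro v
        rw [← huniv]
        rw [show m + 2 = (m + 1) + 1 from rfl, eS19_insert hijR (m+1) v,
          eS19_insert hjR (m+1) v, eS19_insert hjR m v]
      have hzR0 : ∀ l ∈ R, 0 ≤ z l := fun l _ => hz0 l
      have hE2 : 0 ≤ eS19 R m z := eS19_nonneg _ _ _ hzR0
      have hEeq : ∀ p : ℕ, eS19 R p z' = eS19 R p z := fun p => eS19_congr hz'R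
      have hES : eS19 univ (m+2) z ≤ eS19 univ (m+2) z' := by
        rw [hEdec z, hEdec z', hz'i, hz'j, hEeq (m+2), hEeq (m+1), hEeq m]
        rw [hc]
        nlinarith [sq_nonneg (a - b), hE2]
      have hsq : ∑ l, (z' l)^2 < ∑ l, (z l)^2 := by
        rw [hsumdec (fun l => (z' l)^2), hsumdec (fun l => (z l)^2)]
        simp only [hz'i, hz'j]
        have : ∑ l ∈ R, (z' l)^2 = ∑ l ∈ R, (z l)^2 :=
          Finset.sum_congr rfl fun l hl => by rw [hz'R l hl]
        rw [this, hc]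
        have hab : a - b ≠ 0 := sub_ne_zero.mpr hij0
        have : 0 < (a - b)^2 := by positivity
        nlinarith [this]
      have : g z < g z' := by
        rw [hgdef]
        simp only
        nlinarith [hES, hsq, hε]
      exact absurd (hzmax hz'mem) (not_le.mpr this)
    -- z = 1/k
    obtain ⟨i0⟩ := hne
    have hzk : ∀ i, z i = 1 / (k:ℝ) := by
      have hsum : ∑ l, z l = (k:ℝ) * z i0 := by
        rw [Finset.sum_congr rfl fun l _ => hconst l i0]
        rw [Finset.sum_const, Finset.card_univ, nsmul_eq_mul, hkdef]
      intro i
      rw [hconst i i0]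
      rw [hsum] at hz1
      field_simp
      linarith
    have hgz : g z = (k.choose (m+2) : ℝ) / (k:ℝ)^(m+2) - ε * (1 / (k:ℝ)) := by
      rw [hgdef]
      simp only
      congr 1
      · unfold eS19
        have hprod : ∀ T ∈ (univ : Finset ι).powersetCard (m+2),
            ∏ i ∈ T, z i = (1/(k:ℝ))^(m+2) := by
          intro T hT
          rw [Finset.prod_congr rfl fun i _ => hzk i, Finset.prod_const,
            (Finset.mem_powersetCard.mp hT).2]
        rw [Finset.sum_congr rfl hprod, Finset.sum_const, Finset.card_powersetCard,
          Finset.card_univ, ← hkdef, nsmul_eq_mul, div_pow, one_pow]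
        field_simp
      · congr 1
        rw [Finset.sum_congr rfl fun i _ => by rw [hzk i], Finset.sum_const,
          Finset.card_univ, ← hkdef, nsmul_eq_mul]
        field_simp
    have hle : g w ≤ g z := hzmax hw
    rw [hgz, hgdef] at hle
    simp only at hle
    have hsqle : ∑ i, (w i)^2 ≤ 1 := by
      rw [← h1]
      apply Finset.sum_le_sum
      intro i _
      have hwi1 : w i ≤ 1 := by
        rw [← h1]
        exact Finset.single_le_sum (fun j _ => h0 j) (Finset.mem_univ i)
      nlinarith [h0 i]
    have hpos : 0 < 1 / (k:ℝ) := by positivity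
    nlinarith [hε]
  -- conclude
  by_contra hcon
  push_neg at hcon
  obtain ⟨ε, hε, hlt⟩ : ∃ ε : ℝ, 0 < ε ∧
      (k.choose (m+2) : ℝ) / (k:ℝ)^(m+2) + ε < eS19 (univ : Finset ι) (m+2) w := by
    refine ⟨(eS19 (univ : Finset ι) (m+2) w - (k.choose (m+2) : ℝ) / (k:ℝ)^(m+2)) / 2,
      by linarith, by linarith⟩
  exact absurd (key _ hε) (not_le.mpr hlt)

lemma fmono19 (t : ℕ) {k c : ℕ} (hkc : k ≤ c) :
    (k.choose t : ℝ) / (k : ℝ) ^ t ≤ (c.choose t : ℝ) / (c : ℝ) ^ t := by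
  rcases Nat.eq_zero_or_pos k with rfl | hk
  · rcases Nat.eq_zero_or_pos t with rfl | htpos
    · simp
    · rw [Nat.cast_zero, zero_pow (by omega : t ≠ 0), div_zero]
      positivity
  · have hc : 0 < c := lt_of_lt_of_le hk hkc
    have key : k.choose t * c ^ t ≤ c.choose t * k ^ t := by
      have h2 : k.descFactorial t * c ^ t ≤ c.descFactorial t * k ^ t := by
        rw [Nat.descFactorial_eq_prod_range, Nat.descFactorial_eq_prod_range,
          show c ^ t = ∏ _i ∈ range t, c by rw [Finset.prod_const, Finset.card_range],
          show k ^ t = ∏ _i ∈ range t, k by rw [Finset.prod_const, Finset.card_range],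
          ← Finset.prod_mul_distrib, ← Finset.prod_mul_distrib]
        apply Finset.prod_le_prod'
        intro i _
        rw [Nat.sub_mul, Nat.sub_mul, mul_comm c k]
        exact Nat.sub_le_sub_left (Nat.mul_le_mul_left i hkc) (k * c)
      rw [Nat.descFactorial_eq_factorial_mul_choose, Nat.descFactorial_eq_factorial_mul_choose,
        mul_assoc, mul_assoc] at h2
      exact Nat.le_of_mul_le_mul_left h2 (Nat.factorial_pos t)
    rw [div_le_div_iff₀ (by positivity) (by positivity)]
    exact_mod_cast key

/-- Lower bound for `Φ` at a minimizer whose support induces a `k`-clique, via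
Maclaurin's inequality. -/
theorem stmt19 {n : ℕ} (t : ℕ) (ht : 2 ≤ t) (G : SimpleGraph (Fin n))
    (x : Fin n → ℝ) (k : ℕ) (hx : IsMinimizer G t x)
    (hclique : G.IsClique (suppF x : Set (Fin n))) (hk : (suppF x).card = k) :
    ((k.choose t : ℝ) / (k : ℝ) ^ t -
        ∑ s ∈ (ktCliques G t).filter (fun s => s ⊆ suppF x), ∏ v ∈ s, x v) ≤
        PhiFn G t x ∧
      0 ≤ (k.choose t : ℝ) / (k : ℝ) ^ t -
        ∑ s ∈ (ktCliques G t).filter (fun s => s ⊆ suppF x), ∏ v ∈ s, x v := by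
  obtain ⟨⟨hx0, hx1⟩, -⟩ := hx
  have hx_supp0 : ∀ v, v ∉ suppF x → x v = 0 := by
    intro v hv
    have hnp : ¬ 0 < x v := by simpa [suppF] using hv
    linarith [hx0 v, not_lt.mp hnp]
  have hsum : ∑ v ∈ suppF x, x v = 1 := by
    rw [← hx1]
    unfold suppF
    apply Finset.sum_filter_of_ne
    intro v _ hv
    exact lt_of_le_of_ne (hx0 v) (Ne.symm hv)
  have hcsupp : ∀ v ∈ suppF x, k ≤ cliqueAt G v := by
    intro v hv
    rw [← hk]
    unfold cliqueAt
    exact Finset.le_sup (f := Finset.card)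
      (Finset.mem_filter.mpr ⟨Finset.mem_univ _, hclique, hv⟩)
  have hA : (k.choose t : ℝ) / (k : ℝ) ^ t ≤
      ∑ v, x v * ((cliqueAt G v).choose t : ℝ) / (cliqueAt G v : ℝ) ^ t := by
    have heq : ∑ v ∈ suppF x, x v * ((cliqueAt G v).choose t : ℝ) / (cliqueAt G v : ℝ) ^ t
        = ∑ v, x v * ((cliqueAt G v).choose t : ℝ) / (cliqueAt G v : ℝ) ^ t := by
      unfold suppF
      apply Finset.sum_filter_of_ne
      intro v _ hne
      by_contra hnv
      have hxv : x v = 0 := by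
        push_neg at hnv
        linarith [hx0 v]
      exact hne (by rw [hxv, zero_mul, zero_div])
    rw [← heq]
    calc (k.choose t : ℝ) / (k : ℝ) ^ t
        = ∑ v ∈ suppF x, x v * ((k.choose t : ℝ) / (k : ℝ) ^ t) := by
          rw [← Finset.sum_mul, hsum, one_mul]
      _ ≤ _ := by
          apply Finset.sum_le_sum
          intro v hv
          rw [mul_div_assoc]
          exact mul_le_mul_of_nonneg_left (fmono19 t (hcsupp v hv)) (hx0 v)
  have hB : ∑ s ∈ ktCliques G t, ∏ v ∈ s, x v
      = ∑ s ∈ (ktCliques G t).filter (fun s => s ⊆ suppF x), ∏ v ∈ s, x v := by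
    symm
    apply Finset.sum_filter_of_ne
    intro s _ hne v hv
    by_contra hvs
    exact hne (Finset.prod_eq_zero hv (hx_supp0 v hvs))
  have part1 : ((k.choose t : ℝ) / (k : ℝ) ^ t -
      ∑ s ∈ (ktCliques G t).filter (fun s => s ⊆ suppF x), ∏ v ∈ s, x v) ≤ PhiFn G t x := by
    unfold PhiFn
    rw [hB]
    linarith [hA]
  have hflt : (ktCliques G t).filter (fun s => s ⊆ suppF x) = (suppF x).powersetCard t := by
    ext s
    simp only [Finset.mem_filter, Finset.mem_powersetCard, ktCliques, Finset.mem_univ, true_and]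
    constructor
    · rintro ⟨⟨hcard, -⟩, hsub⟩
      exact ⟨hsub, hcard⟩
    · rintro ⟨hsub, hcard⟩
      exact ⟨⟨hcard, hclique.subset (Finset.coe_subset.mpr hsub)⟩, hsub⟩
  have hmac : ∑ s ∈ (suppF x).powersetCard t, ∏ v ∈ s, x v
      ≤ (k.choose t : ℝ) / (k : ℝ) ^ t := by
    have hcard : Fintype.card {v // v ∈ suppF x} = k := by rw [Fintype.card_coe, hk]
    have h1' : ∑ i : {v // v ∈ suppF x}, x i.1 = 1 := by
      rw [Finset.sum_coe_sort]
      exact hsum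
    have hmain := maclaurin19 t ht (fun i : {v // v ∈ suppF x} => x i.1)
      (fun i => hx0 i.1) h1'
    rw [hcard] at hmain
    have htrans : eS19 (univ : Finset {v // v ∈ suppF x}) t (fun i => x i.1)
        = ∑ s ∈ (suppF x).powersetCard t, ∏ v ∈ s, x v := by
      unfold eS19
      conv_rhs => rw [← Finset.attach_map_val (s := suppF x)]
      rw [← Finset.univ_eq_attach, Finset.powersetCard_map, Finset.sum_map]
      apply Finset.sum_congr rfl
      intro T _
      rw [show (Finset.mapEmbedding (Function.Embedding.subtype
          (fun v => v ∈ suppF x))).toEmbedding T = T.map (Function.Embedding.subtype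
          (fun v => v ∈ suppF x)) from rfl, Finset.prod_map]
      rfl
    rw [htrans] at hmain
    exact hmain
  refine ⟨part1, ?_⟩
  rw [hflt]
  linarith [hmac]
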